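/- In the category of sets (Type u), every essential monomorphism m : S ⟶ A is either an isomorphism, or else S is empty and A is a singleton (i.e., S is an initial object and A is a terminal object). -/

import Mathlib

open CategoryTheory Limits

universe u

/-- A morphism `m` is an essential monomorphism if it is a monomorphism and every
morphism `f` such that `m ≫ f` is a monomorphism is itself a monomorphism. -/
def IsEssentialMono {C : Type*} [CategoryTheory.Category C] {S A : C} (m : S ⟶ A) : Prop :=
  CategoryTheory.Mono m ∧
    ∀ ⦃B : C⦄ (f : A ⟶ B), CategoryTheory.Mono (m ≫ f) → CategoryTheory.Mono f

/-- In the category of sets, every essential monomorphism `m : S ⟶ A` is either an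
isomorphism, or else `S` is empty (an initial object) and `A` is a singleton (a terminal
object). -/
theorem essentialMono_in_types {S A : Type u} (m : S ⟶ A) (h : IsEssentialMono m) :
    IsIso m ∨ (IsEmpty S ∧ Nonempty A ∧ Subsingleton A) := by
  classical
  obtain ⟨hm, hess⟩ := h
  rw [CategoryTheory.mono_iff_injective] at hm
  by_cases hS : Nonempty S
  · left
    rw [isIso_iff_bijective]
    refine ⟨hm, fun a => ?_⟩
    by_contra ha
    push_neg at ha
    obtain ⟨s₀⟩ := hS
    set f : A ⟶ A := TypeCat.ofHom fun x => if x = a then m s₀ else x with hf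
    have hcomp : m ≫ f = m := by
      refine ConcreteCategory.ext_apply (fun x => ?_)
      simp only [types_comp_apply, hf, TypeCat.ofHom_apply]
      rw [if_neg (ha x)]
    have hfm : Mono f := hess f (by rw [hcomp]; exact (mono_iff_injective m).mpr hm)
    rw [mono_iff_injective] at hfm
    have h1 : f a = m s₀ := by simp [hf]
    have h2 : f (m s₀) = m s₀ := by
      simp only [hf, TypeCat.ofHom_apply]
      rw [if_neg (ha s₀)]
    exact ha s₀ (hfm (h2.trans h1.symm))
  · have hSe : IsEmpty S := not_nonempty_iff.mp hS
    by_cases hA : Nonempty A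
    · right
      refine ⟨hSe, hA, ?_⟩
      constructor
      intro a b
      set f : A ⟶ A := TypeCat.ofHom fun _ => a with hf
      have hfm : Mono f := hess f (by
        rw [mono_iff_injective]
        intro x; exact hSe.elim x)
      rw [mono_iff_injective] at hfm
      exact hfm rfl
    · left
      rw [isIso_iff_bijective]
      exact ⟨hm, fun a => absurd ⟨a⟩ hA⟩
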